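/- Let g ∈ A be a unit and d ≥ 0 a natural number. Then: if w ∈ {u, −v} and T(g) = X^{−2d}·(R_d + b + w·X^{−1})·g, then T(X^{−d}·g) = (b + w·X^{−1})·(X^{−d}·g); and if w′ ∈ {−u, v} and T(g) = (w′·X^{2d+1} − R_d)·g, then T(X^{d+1}·g) = (b + (c + w′)·X^{−1})·(X^{d+1}·g), where c + w′ ∈ {−v, u}. -/

import Mathlib

open LaurentPolynomial

/-- `R_d = Σ_{j=1}^{d} (b·X^{2j} + c·X^{2j−1})`. -/
noncomputable def Rpoly {K : Type*} [Field K] (u v : K) (d : ℕ) : K[T;T⁻¹] :=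
  ∑ j ∈ Finset.range d, (C (u * v - 1) * T (2 * (j : ℤ) + 2) + C (u - v) * T (2 * (j : ℤ) + 1))

private lemma Rpoly_key {K : Type*} [Field K] (u v : K) (d : ℕ) :
    (T 2 - 1) * Rpoly u v d
      = (C (u * v - 1) * T 2 + C (u - v) * T 1) * (T (2 * (d : ℤ)) - 1) := by
  induction d with
  | zero => simp [Rpoly]
  | succ n ih =>
      rw [Rpoly, Finset.sum_range_succ, ← Rpoly, mul_add, ih]
      have h1 : (2 * ((n + 1 : ℕ) : ℤ)) = 2 * (n : ℤ) + 2 := by push_cast; ring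
      rw [h1]
      have e2 : (T (2 * (n : ℤ) + 2) : K[T;T⁻¹]) = T (2 * (n : ℤ)) * T 2 := by rw [← T_add]
      have e1 : (T (2 * (n : ℤ) + 1) : K[T;T⁻¹]) = T (2 * (n : ℤ)) * T 1 := by rw [← T_add]
      rw [e2, e1]
      ring

private lemma T2_sub_one_ne_zero {K : Type*} [Field K] : (T 2 - 1 : K[T;T⁻¹]) ≠ 0 := by
  intro h
  rw [sub_eq_zero] at h
  have h2 := congrArg (fun f : K[T;T⁻¹] => f.coeff 2) h
  rw [show (1 : K[T;T⁻¹]) = T 0 from (T_zero).symm] at h2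
  simp only [T_apply] at h2
  norm_num at h2

/-- Let `𝒯` satisfy the quadratic relation `𝒯² = b·𝒯 + Q·id` and the
denominator-cleared Bernstein relation. If `g` is a unit, `w ∈ {u, −v}` and
`𝒯(g) = X^{−2d}·(R_d + b + w·X^{−1})·g`, then
`𝒯(X^{−d}·g) = (b + w·X⁻¹)·(X^{−d}·g)`; and if `w′ ∈ {−u, v}` and
`𝒯(g) = (w′·X^{2d+1} − R_d)·g`, then
`𝒯(X^{d+1}·g) = (b + (c + w′)·X⁻¹)·(X^{d+1}·g)`, where `c + w′ ∈ {−v, u}`. -/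
theorem statement15 {K : Type*} [Field K] (u v : K)
    (𝒯 : K[T;T⁻¹] →ₗ[K] K[T;T⁻¹])
    (hquad : ∀ x : K[T;T⁻¹], 𝒯 (𝒯 x) = C (u * v - 1) * 𝒯 x + C (u * v) * x)
    (hcomm : ∀ h x : K[T;T⁻¹],
      (T 2 - 1) * (𝒯 (h * x) - invert h * 𝒯 x)
        = (C (u * v - 1) * T 2 + C (u - v) * T 1) * (h - invert h) * x)
    (g : K[T;T⁻¹]) (hg : IsUnit g) (d : ℕ) :
    (∀ w : K, (w = u ∨ w = -v) →
      𝒯 g = T (-(2 * (d : ℤ))) * (Rpoly u v d + C (u * v - 1) + C w * T (-1)) * g →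
      𝒯 (T (-(d : ℤ)) * g) = (C (u * v - 1) + C w * T (-1)) * (T (-(d : ℤ)) * g)) ∧
    (∀ w' : K, (w' = -u ∨ w' = v) →
      𝒯 g = (C w' * T (2 * (d : ℤ) + 1) - Rpoly u v d) * g →
      𝒯 (T ((d : ℤ) + 1) * g)
          = (C (u * v - 1) + C (u - v + w') * T (-1)) * (T ((d : ℤ) + 1) * g)
        ∧ (u - v + w' = -v ∨ u - v + w' = u)) := by
  have key := Rpoly_key u v d
  have hpq : (T ((d : ℤ)) * T (-(d : ℤ)) : K[T;T⁻¹]) = 1 := by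
    rw [← T_add, add_neg_cancel, T_zero]
  have hst : (T (-1) * T 1 : K[T;T⁻¹]) = 1 := by
    rw [← T_add, neg_add_cancel, T_zero]
  have hq2 : (T (-(2 * (d : ℤ))) : K[T;T⁻¹]) = T (-(d : ℤ)) * T (-(d : ℤ)) := by
    rw [← T_add]; ring_nf
  have hp2 : (T (2 * (d : ℤ)) : K[T;T⁻¹]) = T ((d : ℤ)) * T ((d : ℤ)) := by
    rw [← T_add]; ring_nf
  have ht2 : (T 2 : K[T;T⁻¹]) = T 1 * T 1 := by rw [← T_add]; norm_num
  rw [hp2, ht2] at key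
  constructor
  · intro w _ hTg
    have h1 := hcomm (T (-(d : ℤ))) g
    simp only [invert_T, neg_neg] at h1
    rw [hTg, hq2, ht2] at h1
    apply mul_left_cancel₀ (T2_sub_one_ne_zero (K := K))
    rw [ht2]
    linear_combination h1
      + (g * (T ((d : ℤ)) * T (-(d : ℤ)) * T (-(d : ℤ)))) * key
      - (g * (T (-(d : ℤ)) * C (u * v - 1) + T (-1) * T (-(d : ℤ)) * C w
          + T 1 * T (-(d : ℤ)) * C (u - v) - T 1 * T ((d : ℤ)) * C (u - v)
          - T 1 * T ((d : ℤ)) * T ((d : ℤ)) * T (-(d : ℤ)) * C (u - v)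
          - T 1 * T 1 * T ((d : ℤ)) * C (u * v - 1)
          - T 1 * T 1 * T ((d : ℤ)) * T ((d : ℤ)) * T (-(d : ℤ)) * C (u * v - 1)
          - T 1 * T 1 * T (-1) * T (-(d : ℤ)) * C w)) * hpq
  · intro w' hw' hTg
    have hP : (T ((d : ℤ) + 1) : K[T;T⁻¹]) = T ((d : ℤ)) * T 1 := by rw [← T_add]
    have hQ : (T (-((d : ℤ) + 1)) : K[T;T⁻¹]) = T (-(d : ℤ)) * T (-1) := by
      rw [← T_add]; ring_nf
    have hX : (T (2 * (d : ℤ) + 1) : K[T;T⁻¹]) = T ((d : ℤ)) * T ((d : ℤ)) * T 1 := by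
      rw [show (2 * (d : ℤ) + 1) = (d : ℤ) + ((d : ℤ) + 1) by ring, T_add, T_add]; ring
    refine ⟨?_, ?_⟩
    · have h1 := hcomm (T ((d : ℤ) + 1)) g
      simp only [invert_T] at h1
      rw [hTg, hX, hQ, hP, ht2] at h1
      apply mul_left_cancel₀ (T2_sub_one_ne_zero (K := K))
      rw [ht2, hP, map_add]
      linear_combination h1
        - (g * (T (-(d : ℤ)) * T (-1))) * key
        - (g * (T 1 * T (-1) * T ((d : ℤ)) * (C w' + C (u - v))
            + T 1 * T 1 * T (-1) * T ((d : ℤ)) * C (u * v - 1)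
            - T 1 * T 1 * T 1 * T (-1) * T ((d : ℤ)) * C w')) * hpq
        - (g * (T 1 * T ((d : ℤ)) * C (u * v - 1)
            + T 1 * T 1 * T ((d : ℤ)) * C (u - v))) * hst
    · rcases hw' with h | h <;> subst h
      · left; ring
      · right; ring
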